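/- Let σ be a skew-merged permutation (avoiding 2143 and 3412) that is an involution. If there exist indices i < j < j+1 < k such that σ(i), σ(j), σ(j+1), σ(k) form a 3142-pattern, then σ contains a 3412-pattern or a 2143-pattern — a contradiction; hence no skew-merged involution contains a 3142-pattern occupying positions i < j < j+1 < k with the middle two positions adjacent. -/

import Mathlib

/-- σ contains the pattern 2143. -/
def Contains2143 {n : ℕ} (σ : Equiv.Perm (Fin n)) : Prop :=
  ∃ i1 i2 i3 i4 : Fin n, i1 < i2 ∧ i2 < i3 ∧ i3 < i4 ∧
    σ i2 < σ i1 ∧ σ i1 < σ i4 ∧ σ i4 < σ i3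

/-- σ contains the pattern 3412. -/
def Contains3412 {n : ℕ} (σ : Equiv.Perm (Fin n)) : Prop :=
  ∃ i1 i2 i3 i4 : Fin n, i1 < i2 ∧ i2 < i3 ∧ i3 < i4 ∧
    σ i3 < σ i4 ∧ σ i4 < σ i1 ∧ σ i1 < σ i2

/-- A permutation is skew-merged iff it avoids 2143 and 3412. -/
def SkewMerged {n : ℕ} (σ : Equiv.Perm (Fin n)) : Prop :=
  ¬ Contains2143 σ ∧ ¬ Contains3412 σ

theorem skewMerged_involution_no_adjacent_3142 (n : ℕ) (σ : Equiv.Perm (Fin n))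
    (hsm : SkewMerged σ) (hinv : σ⁻¹ = σ) :
    ¬ ∃ i j j' k : Fin n, (i : ℕ) < j ∧ (j' : ℕ) = (j : ℕ) + 1 ∧ (j' : ℕ) < k ∧
      σ j < σ k ∧ σ k < σ i ∧ σ i < σ j' := by
  rintro ⟨i, j, j', k, hij, hjj', hj'k, h1, h2, h3⟩
  obtain ⟨hno2143, hno3412⟩ := hsm
  have hfix : ∀ x, σ (σ x) = x := by
    intro x
    nth_rewrite 1 [← hinv]
    exact σ.symm_apply_apply x
  set A := σ j with hA
  set B := σ k with hB
  set C := σ i with hC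
  set D := σ j' with hD
  have hsA : σ A = j := hfix j
  have hsB : σ B = k := hfix k
  have hsC : σ C = i := hfix i
  have hsD : σ D = j' := hfix j'
  -- value inequalities as naturals
  have hAB : (A : ℕ) < B := h1
  have hBC : (B : ℕ) < C := h2
  have hCD : (C : ℕ) < D := h3
  by_cases hcase : (i : ℕ) < C ∧ (j' : ℕ) < D
  · obtain ⟨hiC, hj'D⟩ := hcase
    -- split on C vs j (adjacency: C ≤ j or j' ≤ C)
    by_cases hCj : (C : ℕ) ≤ j
    · -- 2143 at (i, C, j', D)
      exact hno2143 ⟨i, C, j', D, by omega, by omega, by omega, by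
        rw [hsC]; exact Fin.lt_def.2 hiC, by
        rw [hsD]; exact Fin.lt_def.2 (by omega), by
        rw [hsD]; exact Fin.lt_def.2 hj'D⟩
    · -- j' ≤ C; moreover C ≠ j' (else i = D, impossible)
      have hne : (C : ℕ) ≠ j' := by
        intro h
        have hDi : (D : ℕ) = i := congrArg Fin.val (by rw [hD, ← Fin.ext h, hsC])
        omega
      exact hno3412 ⟨i, j', C, D, by omega, by omega, by omega, by
        rw [hsC, hsD]; exact Fin.lt_def.2 (by omega), by
        rw [hsD]; exact Fin.lt_def.2 (by omega), by
        exact Fin.lt_def.2 hCD⟩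
  · -- C ≤ i or D ≤ j'. Derive A < j and B < k.
    push_neg at hcase
    have hAj : (A : ℕ) < j := by
      by_cases hCi : (C : ℕ) ≤ i
      · omega
      · have hDj' : (D : ℕ) ≤ j' := hcase (by omega)
        omega
    have hBk : (B : ℕ) < k := by
      by_cases hCi : (C : ℕ) ≤ i
      · omega
      · have hDj' : (D : ℕ) ≤ j' := hcase (by omega)
        omega
    have hBj : (B : ℕ) ≠ j := by
      intro h
      have hAk : (A : ℕ) = k := congrArg Fin.val (by rw [hA, ← hsB, Fin.ext h])
      omega
    by_cases hBj' : (B : ℕ) < j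
    · -- 3412 at (A, B, j, k)
      exact hno3412 ⟨A, B, j, k, Fin.lt_def.2 (by omega), Fin.lt_def.2 (by omega),
        Fin.lt_def.2 (by omega), h1, by
        rw [hsA, ← hB]; exact Fin.lt_def.2 (by omega), by
        rw [hsA, hsB]; exact Fin.lt_def.2 (by omega)⟩
    · -- j < B : 2143 at (A, j, B, k)
      exact hno2143 ⟨A, j, B, k, Fin.lt_def.2 (by omega), Fin.lt_def.2 (by omega),
        Fin.lt_def.2 (by omega), by
        rw [hsA]; exact Fin.lt_def.2 (by omega), by
        rw [hsA]; exact Fin.lt_def.2 (by omega), by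
        rw [hsB]; exact Fin.lt_def.2 (by omega)⟩
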